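/- Let Θ be a metric space of parameters with true parameter θ0 ∈ Θ, and let y_1,…,y_n be i.i.d. observations with density p(·|θ0). Define M_n(θ) = (1/n)·Σ_{i=1}^n ln(p(y_i|θ)/p(y_i|θ0)) and M(θ) = −KL(p(·|θ0) ‖ p(·|θ)). Assume: (i) the log-prior ln p(θ) is continuous and bounded from above on Θ and p(θ0) > 0; (ii) sup_{θ∈Θ} |M_n(θ) − M(θ)| → 0 in probability; (iii) for every ε > 0, sup_{θ : d(θ,θ0) ≥ ε} M(θ) < M(θ0). If μ_n is, for each n, a maximizer over Θ of θ ↦ M_n(θ) + (1/n)·ln p(θ), then μ_n → θ0 in probability. -/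

import Mathlib

open MeasureTheory ProbabilityTheory Filter

/-- Consistency of the MAP estimator: with `y₁, …, yₙ` i.i.d. with density
`p(·|θ0)`, `Mₙ(θ) = (1/n) ∑ ln (p(yᵢ|θ)/p(yᵢ|θ0))` and `M(θ) = −KL(p(·|θ0) ‖ p(·|θ))`,
assuming a continuous log-prior bounded from above with `p(θ0) > 0`, uniform convergence in
probability of `Mₙ` to `M`, and a well-separated maximum of `M` at `θ0`, any sequence of
maximizers `μₙ` of `θ ↦ Mₙ(θ) + (1/n) ln p(θ)` converges in probability to `θ0`. -/
theorem map_estimator_consistent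
    {Θ : Type*} [MetricSpace Θ] (θ0 : Θ)
    {Ω : Type*} [MeasurableSpace Ω] (P : Measure Ω) [IsProbabilityMeasure P]
    (p : Θ → ℝ → ℝ) (prior : Θ → ℝ)
    -- i.i.d. observations with density `p (·|θ0)` with respect to Lebesgue measure
    (y : ℕ → Ω → ℝ) (hmeas : ∀ i, Measurable (y i))
    (hindep : iIndepFun y P)
    (hlaw : ∀ i, Measure.map (y i) P
      = volume.withDensity fun x => ENNReal.ofReal (p θ0 x))
    -- the random criterion `Mₙ` and its deterministic limit `M = -KL`
    (Mn : ℕ → Ω → Θ → ℝ)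
    (hMn : ∀ n ω θ, Mn n ω θ
      = (n : ℝ)⁻¹ * ∑ i ∈ Finset.range n, Real.log (p θ (y i ω) / p θ0 (y i ω)))
    (M : Θ → ℝ)
    (hM : ∀ θ, M θ = - ∫ x, p θ0 x * Real.log (p θ0 x / p θ x))
    -- (i) conditions on the prior
    (hprior_cont : Continuous fun θ => Real.log (prior θ))
    (hprior_bdd : ∃ B, ∀ θ, Real.log (prior θ) ≤ B)
    (hprior_pos : 0 < prior θ0)
    -- (ii) `sup_θ |Mₙ(θ) − M(θ)| → 0` in probability
    (hunif : ∀ ε > 0,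
      Tendsto (fun n => P {ω | ∃ θ, ε < |Mn n ω θ - M θ|}) atTop (nhds 0))
    -- (iii) well-separated maximum: `sup_{d(θ,θ0) ≥ ε} M(θ) < M(θ0)`
    (hsep : ∀ ε > 0, ∃ δ > 0, ∀ θ, ε ≤ dist θ θ0 → M θ ≤ M θ0 - δ)
    -- `μₙ` maximizes `θ ↦ Mₙ(θ) + (1/n)·ln p(θ)`
    (μn : ℕ → Ω → Θ)
    (hmax : ∀ n ω θ,
      Mn n ω θ + (n : ℝ)⁻¹ * Real.log (prior θ)
        ≤ Mn n ω (μn n ω) + (n : ℝ)⁻¹ * Real.log (prior (μn n ω))) :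
    -- conclusion: `μₙ → θ0` in probability
    ∀ ε > 0, Tendsto (fun n => P {ω | ε < dist (μn n ω) θ0}) atTop (nhds 0) := by
  intro ε hε
  obtain ⟨δ, hδ, hsepδ⟩ := hsep ε hε
  obtain ⟨B, hB⟩ := hprior_bdd
  set C : ℝ := B - Real.log (prior θ0) with hC
  -- eventually (n:ℝ)⁻¹ * C ≤ δ/2
  have hinv : Tendsto (fun n : ℕ => (n : ℝ)⁻¹ * C) atTop (nhds 0) := by
    simpa using (tendsto_inv_atTop_nhds_zero_nat.mul_const C)
  have hev : ∀ᶠ n : ℕ in atTop, (n : ℝ)⁻¹ * C ≤ δ / 2 := by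
    have := hinv.eventually (eventually_le_nhds (by linarith : (0:ℝ) < δ / 2))
    exact this
  have key : ∀ᶠ n : ℕ in atTop,
      P {ω | ε < dist (μn n ω) θ0} ≤ P {ω | ∃ θ, δ/5 < |Mn n ω θ - M θ|} := by
    filter_upwards [hev] with n hn
    refine measure_mono fun ω hω => ?_
    simp only [Set.mem_setOf_eq] at hω ⊢
    by_contra hcon
    push_neg at hcon
    have h1 : |Mn n ω θ0 - M θ0| ≤ δ/5 := hcon θ0
    have h2 : |Mn n ω (μn n ω) - M (μn n ω)| ≤ δ/5 := hcon (μn n ω)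
    have hsepp : M (μn n ω) ≤ M θ0 - δ := hsepδ _ (le_of_lt hω)
    have hmax' := hmax n ω θ0
    have hninv : (0:ℝ) ≤ (n : ℝ)⁻¹ := by positivity
    have hdiff : Mn n ω θ0 - Mn n ω (μn n ω) ≤ (n : ℝ)⁻¹ * C := by
      have hlog : Real.log (prior (μn n ω)) - Real.log (prior θ0) ≤ C := by
        have := hB (μn n ω); simp [hC]; linarith
      have h3 : (n : ℝ)⁻¹ * (Real.log (prior (μn n ω)) - Real.log (prior θ0))
          ≤ (n : ℝ)⁻¹ * C := mul_le_mul_of_nonneg_left hlog hninv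
      nlinarith [hmax']
    have ha := abs_le.1 h1
    have hb := abs_le.1 h2
    have : δ ≤ M θ0 - M (μn n ω) := by linarith
    linarith [hn]
  have hzero := hunif (δ/5) (by linarith)
  exact tendsto_of_tendsto_of_tendsto_of_le_of_le' tendsto_const_nhds hzero
    (Eventually.of_forall fun n => zero_le) key
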